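/- Under the same perturbed-consensus setting, if in addition Σ_{k=0}^∞ α_k² < ∞, then the weighted disagreement is summable: Σ_{k=0}^∞ α_k h(k) < ∞, where h(k) = max_{i,j} |x_i(k) − x_j(k)|. -/

import Mathlib

/-- `Phi A s t` is the transition matrix `Φ(s+t, s) = A(s+t)⋯A(s)`. -/
def Phi {n : ℕ} (A : ℕ → Matrix (Fin n) (Fin n) ℝ) (s : ℕ) : ℕ → Matrix (Fin n) (Fin n) ℝ
  | 0 => A s
  | t + 1 => A (s + t + 1) * Phi A s t

/-- Perturbed consensus dynamics with square-summable stepsizes: the weighted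
disagreement `Σ_k α_k h(k)` is finite, where `h(k) = max_{i,j} |x_i(k) − x_j(k)|`. -/
theorem stmt13 {n : ℕ} [Nonempty (Fin n)] (A : ℕ → Matrix (Fin n) (Fin n) ℝ)
    (hnn : ∀ k i j, 0 ≤ A k i j) (hrow : ∀ k i, ∑ j, A k i j = 1)
    (T : ℕ) (hT : 0 < T) (η : ℝ) (hη0 : 0 < η) (hη1 : η < 1)
    (hwin : ∀ s : ℕ, ∀ i j : Fin n, η ^ T ≤ Phi A s (T - 1) i j)
    (L : ℝ) (hL : 0 < L)
    (α : ℕ → ℝ) (hαpos : ∀ k, 0 < α k) (hα2 : Summable (fun k => α k ^ 2))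
    (x ω : ℕ → Fin n → ℝ)
    (hdyn : ∀ k i, x (k + 1) i = (∑ j, A k i j * x k j) + ω k i)
    (hω : ∀ k i, |ω k i| ≤ L * α k) :
    Summable (fun k => α k * (Finset.univ : Finset (Fin n × Fin n)).sup' Finset.univ_nonempty
        (fun p => |x k p.1 - x k p.2|)) := by
  have hα0 : ∀ k, 0 ≤ α k := fun k => (hαpos k).le
  -- Properties of Phi
  have hPhinn : ∀ s m i j, 0 ≤ Phi A s m i j := by
    intro s m
    induction m with
    | zero => exact fun i j => hnn s i j
    | succ m ih =>
      intro i j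
      show 0 ≤ (A (s + m + 1) * Phi A s m) i j
      rw [Matrix.mul_apply]
      exact Finset.sum_nonneg fun l _ => mul_nonneg (hnn _ _ _) (ih l j)
  have hProw : ∀ s m i, ∑ j, Phi A s m i j = 1 := by
    intro s m
    induction m with
    | zero => exact fun i => hrow s i
    | succ m ih =>
      intro i
      show ∑ j, (A (s + m + 1) * Phi A s m) i j = 1
      simp only [Matrix.mul_apply]
      rw [Finset.sum_comm]
      calc ∑ l, ∑ j, A (s + m + 1) i l * Phi A s m l j
          = ∑ l, A (s + m + 1) i l * ∑ j, Phi A s m l j := by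
            simp [Finset.mul_sum]
        _ = 1 := by simp only [ih, mul_one]; exact hrow _ i
  -- noise propagation bound
  have hprop : ∀ k m i, |x (k + m + 1) i - ∑ j, Phi A k m i j * x k j| ≤
      L * ∑ t ∈ Finset.range (m + 1), α (k + t) := by
    intro k m
    induction m with
    | zero =>
      intro i
      have : x (k + 0 + 1) i - ∑ j, Phi A k 0 i j * x k j = ω k i := by
        show x (k + 1) i - ∑ j, A k i j * x k j = ω k i
        rw [hdyn]; ring
      rw [this, Finset.sum_range_one]
      simpa using hω k i
    | succ m ih =>
      intro i
      have hsplit : x (k + (m + 1) + 1) i - ∑ j, Phi A k (m + 1) i j * x k j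
          = (∑ l, A (k + m + 1) i l * (x (k + m + 1) l - ∑ j, Phi A k m l j * x k j))
            + ω (k + m + 1) i := by
        have h1 : x (k + (m + 1) + 1) i = (∑ l, A (k + m + 1) i l * x (k + m + 1) l)
            + ω (k + m + 1) i := by
          have := hdyn (k + m + 1) i
          convert this using 3 <;> omega
        have h2 : ∑ j, Phi A k (m + 1) i j * x k j
            = ∑ l, A (k + m + 1) i l * ∑ j, Phi A k m l j * x k j := by
          show ∑ j, (A (k + m + 1) * Phi A k m) i j * x k j = _
          simp only [Matrix.mul_apply, Finset.sum_mul, Finset.mul_sum]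
          rw [Finset.sum_comm]
          congr 1; ext l; congr 1; ext j; ring
        have h3 : ∑ l, A (k + m + 1) i l * (x (k + m + 1) l - ∑ j, Phi A k m l j * x k j)
            = (∑ l, A (k + m + 1) i l * x (k + m + 1) l)
              - ∑ l, A (k + m + 1) i l * ∑ j, Phi A k m l j * x k j := by
          rw [← Finset.sum_sub_distrib]
          exact Finset.sum_congr rfl fun l _ => by ring
        rw [h1, h2, h3]; ring
      rw [hsplit]
      calc |(∑ l, A (k + m + 1) i l * (x (k + m + 1) l - ∑ j, Phi A k m l j * x k j))
            + ω (k + m + 1) i|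
          ≤ |∑ l, A (k + m + 1) i l * (x (k + m + 1) l - ∑ j, Phi A k m l j * x k j)|
            + |ω (k + m + 1) i| := abs_add_le _ _
        _ ≤ (∑ l, A (k + m + 1) i l * (L * ∑ t ∈ Finset.range (m + 1), α (k + t)))
            + L * α (k + m + 1) := by
            gcongr
            · calc |∑ l, A (k + m + 1) i l * (x (k + m + 1) l - ∑ j, Phi A k m l j * x k j)|
                  ≤ ∑ l, |A (k + m + 1) i l * (x (k + m + 1) l - ∑ j, Phi A k m l j * x k j)| :=
                    Finset.abs_sum_le_sum_abs _ _
                _ ≤ ∑ l, A (k + m + 1) i l * (L * ∑ t ∈ Finset.range (m + 1), α (k + t)) := by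
                    apply Finset.sum_le_sum
                    intro l _
                    rw [abs_mul, abs_of_nonneg (hnn _ _ _)]
                    exact mul_le_mul_of_nonneg_left (ih l) (hnn _ _ _)
            · exact hω _ i
        _ = L * ∑ t ∈ Finset.range (m + 1 + 1), α (k + t) := by
            rw [← Finset.sum_mul, hrow, one_mul, Finset.sum_range_succ _ (m+1), mul_add]; ring_nf
  -- max / min / disagreement
  have hne : (Finset.univ : Finset (Fin n)).Nonempty := Finset.univ_nonempty
  set M : ℕ → ℝ := fun k => Finset.univ.sup' hne (x k) with hM
  set m' : ℕ → ℝ := fun k => Finset.univ.inf' hne (x k) with hm'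
  set g : ℕ → ℝ := fun k => M k - m' k with hg
  have hxleM : ∀ k i, x k i ≤ M k := fun k i => Finset.le_sup' (x k) (Finset.mem_univ i)
  have hmlex : ∀ k i, m' k ≤ x k i := fun k i => Finset.inf'_le (x k) (Finset.mem_univ i)
  have hg0 : ∀ k, 0 ≤ g k := by
    intro k
    obtain ⟨i⟩ := (inferInstance : Nonempty (Fin n))
    have h1 := hxleM k i
    have h2 := hmlex k i
    simp only [hg]; linarith
  have hmain : ∀ k, (Finset.univ : Finset (Fin n × Fin n)).sup' Finset.univ_nonempty
      (fun p => |x k p.1 - x k p.2|) = g k := by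
    intro k
    apply le_antisymm
    · apply Finset.sup'_le
      intro p _
      rw [abs_sub_le_iff]
      constructor
      · have h1 := hxleM k p.1; have h2 := hmlex k p.2; simp only [hg]; linarith
      · have h1 := hxleM k p.2; have h2 := hmlex k p.1; simp only [hg]; linarith
    · obtain ⟨i, _, hi⟩ := Finset.exists_mem_eq_sup' hne (x k)
      obtain ⟨j, _, hj⟩ := Finset.exists_mem_eq_inf' hne (x k)
      have hgij : g k = x k i - x k j := by
        simp only [hg, hM, hm']
        rw [← hi, ← hj]
      rw [hgij]
      calc x k i - x k j ≤ |x k i - x k j| := le_abs_self _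
        _ ≤ _ := Finset.le_sup' (fun p : Fin n × Fin n => |x k p.1 - x k p.2|)
              (Finset.mem_univ (i, j))
  -- contraction constants
  set c : ℝ := η ^ T with hc
  have hc0 : 0 < c := pow_pos hη0 T
  set lam : ℝ := 1 - n * c with hlam
  have hn0 : 0 < n := (Classical.arbitrary (Fin n)).pos
  have hlam1 : lam < 1 := by
    have : 0 < (n : ℝ) * c := by positivity
    simp only [hlam]; linarith
  have hlam0 : 0 ≤ lam := by
    obtain ⟨i⟩ := (inferInstance : Nonempty (Fin n))
    have h1 : (n : ℝ) * c ≤ ∑ j, Phi A 0 (T - 1) i j := by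
      calc (n : ℝ) * c = ∑ _j : Fin n, c := by
            rw [Finset.sum_const, Finset.card_univ, Fintype.card_fin, nsmul_eq_mul]
        _ ≤ _ := Finset.sum_le_sum fun j _ => hwin 0 i j
    rw [hProw 0 (T-1) i] at h1
    simp only [hlam]; linarith
  -- convex combination bounds
  have hcomb_ub : ∀ (k : ℕ) (P : Matrix (Fin n) (Fin n) ℝ), (∀ i j, 0 ≤ P i j) →
      (∀ i, ∑ j, P i j = 1) → ∀ i, ∑ j, P i j * x k j ≤ M k := by
    intro k P hP hPr i
    calc ∑ j, P i j * x k j ≤ ∑ j, P i j * M k :=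
          Finset.sum_le_sum fun j _ => mul_le_mul_of_nonneg_left (hxleM k j) (hP i j)
      _ = M k := by rw [← Finset.sum_mul, hPr, one_mul]
  have hcomb_lb : ∀ (k : ℕ) (P : Matrix (Fin n) (Fin n) ℝ), (∀ i j, 0 ≤ P i j) →
      (∀ i, ∑ j, P i j = 1) → ∀ i, m' k ≤ ∑ j, P i j * x k j := by
    intro k P hP hPr i
    calc m' k = ∑ j, P i j * m' k := by rw [← Finset.sum_mul, hPr, one_mul]
      _ ≤ ∑ j, P i j * x k j :=
          Finset.sum_le_sum fun j _ => mul_le_mul_of_nonneg_left (hmlex k j) (hP i j)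
  -- one-step bound
  have hstep : ∀ k, g (k + 1) ≤ g k + 2 * L * α k := by
    intro k
    have hub : ∀ i, x (k + 1) i ≤ M k + L * α k := by
      intro i
      rw [hdyn]
      have h1 := hcomb_ub k (A k) (hnn k) (hrow k) i
      have hω' := (abs_le.mp (hω k i)).2
      linarith
    have hlb : ∀ i, m' k - L * α k ≤ x (k + 1) i := by
      intro i
      rw [hdyn]
      have h1 := hcomb_lb k (A k) (hnn k) (hrow k) i
      have hω' := (abs_le.mp (hω k i)).1
      linarith
    have h1 : M (k + 1) ≤ M k + L * α k := Finset.sup'_le _ _ fun i _ => hub i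
    have h2 : m' k - L * α k ≤ m' (k + 1) := Finset.le_inf' _ _ fun i _ => hlb i
    simp only [hg]; linarith
  -- T-step contraction
  have hcontr : ∀ k, g (k + T) ≤ lam * g k + 2 * L * ∑ t ∈ Finset.range T, α (k + t) := by
    intro k
    set P := Phi A k (T - 1) with hP
    have hPnn := hPhinn k (T - 1)
    have hPr := hProw k (T - 1)
    have hidx : k + (T - 1) + 1 = k + T := by omega
    have hidx2 : (T - 1) + 1 = T := by omega
    have hbnd : ∀ i, |x (k + T) i - ∑ j, P i j * x k j| ≤
        L * ∑ t ∈ Finset.range T, α (k + t) := by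
      intro i
      have := hprop k (T - 1) i
      rwa [hidx, hidx2] at this
    set S : ℝ := L * ∑ t ∈ Finset.range T, α (k + t) with hS
    have hub : ∀ i, x (k + T) i ≤ lam * M k + c * (∑ j, x k j) + S := by
      intro i
      have h1 := (abs_le.mp (hbnd i)).2
      have h2 : ∑ j, P i j * x k j ≤ lam * M k + c * ∑ j, x k j := by
        have hsplit : ∑ j, P i j * x k j
            = (∑ j, (P i j - c) * x k j) + c * ∑ j, x k j := by
          rw [Finset.mul_sum, ← Finset.sum_add_distrib]
          exact Finset.sum_congr rfl fun j _ => by ring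
        have h3 : ∑ j, (P i j - c) * x k j ≤ ∑ j, (P i j - c) * M k := by
          apply Finset.sum_le_sum
          intro j _
          exact mul_le_mul_of_nonneg_left (hxleM k j)
            (by have := hwin k i j; simp only [hP]; linarith)
        have h4 : ∑ j, (P i j - c) * M k = lam * M k := by
          rw [← Finset.sum_mul, Finset.sum_sub_distrib, hPr i, Finset.sum_const,
            Finset.card_univ, Fintype.card_fin, nsmul_eq_mul, hlam]
        linarith
      linarith
    have hlb : ∀ i, lam * m' k + c * (∑ j, x k j) - S ≤ x (k + T) i := by
      intro i
      have h1 := (abs_le.mp (hbnd i)).1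
      have h2 : lam * m' k + c * ∑ j, x k j ≤ ∑ j, P i j * x k j := by
        have hsplit : ∑ j, P i j * x k j
            = (∑ j, (P i j - c) * x k j) + c * ∑ j, x k j := by
          rw [Finset.mul_sum, ← Finset.sum_add_distrib]
          exact Finset.sum_congr rfl fun j _ => by ring
        have h3 : ∑ j, (P i j - c) * m' k ≤ ∑ j, (P i j - c) * x k j := by
          apply Finset.sum_le_sum
          intro j _
          exact mul_le_mul_of_nonneg_left (hmlex k j)
            (by have := hwin k i j; simp only [hP]; linarith)
        have h4 : ∑ j, (P i j - c) * m' k = lam * m' k := by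
          rw [← Finset.sum_mul, Finset.sum_sub_distrib, hPr i, Finset.sum_const,
            Finset.card_univ, Fintype.card_fin, nsmul_eq_mul, hlam]
        linarith
      linarith
    have h1 : M (k + T) ≤ lam * M k + c * (∑ j, x k j) + S :=
      Finset.sup'_le _ _ fun i _ => hub i
    have h2 : lam * m' k + c * (∑ j, x k j) - S ≤ m' (k + T) :=
      Finset.le_inf' _ _ fun i _ => hlb i
    simp only [hg, hS] at *
    linarith
  -- multi-step bound
  have hsteps : ∀ k m, g (k + m) ≤ g k + 2 * L * ∑ t ∈ Finset.range m, α (k + t) := by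
    intro k m
    induction m with
    | zero => simp
    | succ m ih =>
      rw [Finset.sum_range_succ]
      calc g (k + (m + 1)) = g (k + m + 1) := by ring_nf
        _ ≤ g (k + m) + 2 * L * α (k + m) := hstep (k + m)
        _ ≤ g k + 2 * L * ∑ t ∈ Finset.range m, α (k + t) + 2 * L * α (k + m) := by linarith
        _ = _ := by ring
  -- closed-form bound
  have hclosed : ∀ k, g k ≤ lam ^ (k / T) * g 0
      + 2 * L * ∑ t ∈ Finset.range k, lam ^ ((k - 1 - t) / T) * α t := by
    intro k
    induction k using Nat.strong_induction_on with
    | _ k ih =>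
      by_cases hk : k < T
      · have hdiv : k / T = 0 := Nat.div_eq_of_lt hk
        have h1 : g k ≤ g 0 + 2 * L * ∑ t ∈ Finset.range k, α t := by
          have := hsteps 0 k
          simpa using this
        have h2 : ∑ t ∈ Finset.range k, α t
            = ∑ t ∈ Finset.range k, lam ^ ((k - 1 - t) / T) * α t := by
          apply Finset.sum_congr rfl
          intro t ht
          have : (k - 1 - t) / T = 0 := Nat.div_eq_of_lt (by omega)
          rw [this, pow_zero, one_mul]
        rw [hdiv, pow_zero, one_mul]
        rw [h2] at h1
        exact h1
      · push_neg at hk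
        have hkT : k - T < k := by omega
        have hIH := ih (k - T) hkT
        have hc := hcontr (k - T)
        rw [Nat.sub_add_cancel hk] at hc
        have hmul : lam * g (k - T) ≤ lam ^ ((k - T) / T + 1) * g 0
            + 2 * L * ∑ t ∈ Finset.range (k - T), lam ^ ((k - T - 1 - t) / T + 1) * α t := by
          have h0 := mul_le_mul_of_nonneg_left hIH hlam0
          have hS : lam * ∑ t ∈ Finset.range (k - T), lam ^ ((k - T - 1 - t) / T) * α t
              = ∑ t ∈ Finset.range (k - T), lam ^ ((k - T - 1 - t) / T + 1) * α t := by
            rw [Finset.mul_sum]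
            exact Finset.sum_congr rfl fun t _ => by rw [pow_succ]; ring
          calc lam * g (k - T) ≤ lam * (lam ^ ((k - T) / T) * g 0
                + 2 * L * ∑ t ∈ Finset.range (k - T), lam ^ ((k - T - 1 - t) / T) * α t) := h0
            _ = lam ^ ((k - T) / T + 1) * g 0
                + 2 * L * (lam * ∑ t ∈ Finset.range (k - T), lam ^ ((k - T - 1 - t) / T) * α t) := by
                rw [pow_succ]; ring
            _ = _ := by rw [hS]
        have hdiv : k / T = (k - T) / T + 1 := Nat.div_eq_sub_div hT hk
        have hsplit : ∑ t ∈ Finset.range k, lam ^ ((k - 1 - t) / T) * α t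
            = (∑ t ∈ Finset.range (k - T), lam ^ ((k - T - 1 - t) / T + 1) * α t)
              + ∑ t ∈ Finset.range T, α (k - T + t) := by
          rw [Finset.range_eq_Ico,
            ← Finset.sum_Ico_consecutive _ (Nat.zero_le (k - T)) (Nat.sub_le k T)]
          congr 1
          · rw [← Finset.range_eq_Ico]
            apply Finset.sum_congr rfl
            intro t ht
            rw [Finset.mem_range] at ht
            congr 2
            have h1 : k - 1 - t ≥ T := by omega
            rw [Nat.div_eq_sub_div hT h1]
            have h2 : k - 1 - t - T = k - T - 1 - t := by omega
            rw [h2]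
          · rw [Finset.sum_Ico_eq_sum_range]
            have hTT : k - (k - T) = T := by omega
            rw [hTT]
            apply Finset.sum_congr rfl
            intro t ht
            rw [Finset.mem_range] at ht
            have : (k - 1 - (k - T + t)) / T = 0 := Nat.div_eq_of_lt (by omega)
            rw [this, pow_zero, one_mul]
        rw [hsplit, hdiv]
        calc g k ≤ lam * g (k - T) + 2 * L * ∑ t ∈ Finset.range T, α (k - T + t) := hc
          _ ≤ lam ^ ((k - T) / T + 1) * g 0
              + 2 * L * ∑ t ∈ Finset.range (k - T), lam ^ ((k - T - 1 - t) / T + 1) * α t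
              + 2 * L * ∑ t ∈ Finset.range T, α (k - T + t) := by linarith
          _ = _ := by ring
  -- summability via partial-sum bound
  set B : ℝ := ∑' k, α k ^ 2 with hB
  have hBsum : ∀ s : Finset ℕ, ∑ k ∈ s, α k ^ 2 ≤ B :=
    fun s => Summable.sum_le_tsum s (fun k _ => sq_nonneg _) hα2
  set G : ℝ := (T : ℝ) * (1 - lam)⁻¹ with hG
  have h1lam : 0 < 1 - lam := by linarith
  have hG0 : 0 ≤ G := by positivity
  have hgeo1 : ∀ N, ∑ q ∈ Finset.range N, lam ^ q ≤ (1 - lam)⁻¹ := by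
    intro N
    have hs : Summable (fun q : ℕ => lam ^ q) := summable_geometric_of_lt_one hlam0 hlam1
    calc ∑ q ∈ Finset.range N, lam ^ q ≤ ∑' q, lam ^ q :=
          Summable.sum_le_tsum _ (fun q _ => pow_nonneg hlam0 q) hs
      _ = (1 - lam)⁻¹ := tsum_geometric_of_lt_one hlam0 hlam1
  have hblock : ∀ N, ∑ d ∈ Finset.range (N * T), lam ^ (d / T)
      = ∑ q ∈ Finset.range N, (T : ℝ) * lam ^ q := by
    intro N
    induction N with
    | zero => simp
    | succ N ih =>
      have hNT : (N + 1) * T = N * T + T := by ring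
      rw [hNT, Finset.range_eq_Ico,
        ← Finset.sum_Ico_consecutive _ (Nat.zero_le (N * T)) (Nat.le_add_right (N * T) T),
        ← Finset.range_eq_Ico, ih, Finset.sum_range_succ]
      congr 1
      have hconst : ∀ d ∈ Finset.Ico (N * T) (N * T + T), lam ^ (d / T) = lam ^ N := by
        intro d hd
        rw [Finset.mem_Ico] at hd
        have : d / T = N := Nat.div_eq_of_lt_le (by omega) (by rw [add_mul, one_mul]; omega)
        rw [this]
      rw [Finset.sum_congr rfl hconst, Finset.sum_const, Nat.card_Ico]
      have : N * T + T - N * T = T := by omega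
      rw [this, nsmul_eq_mul]
  have hgeom : ∀ N, ∑ d ∈ Finset.range N, lam ^ (d / T) ≤ G := by
    intro N
    have hsub : Finset.range N ⊆ Finset.range (N * T) :=
      Finset.range_subset_range.mpr (Nat.le_mul_of_pos_right N hT)
    calc ∑ d ∈ Finset.range N, lam ^ (d / T)
        ≤ ∑ d ∈ Finset.range (N * T), lam ^ (d / T) :=
          Finset.sum_le_sum_of_subset_of_nonneg hsub fun d _ _ => pow_nonneg hlam0 _
      _ = ∑ q ∈ Finset.range N, (T : ℝ) * lam ^ q := hblock N
      _ = (T : ℝ) * ∑ q ∈ Finset.range N, lam ^ q := by rw [Finset.mul_sum]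
      _ ≤ G := by
          have := hgeo1 N
          rw [hG]
          exact mul_le_mul_of_nonneg_left this (Nat.cast_nonneg T)
  have hpoint : ∀ k, α k * g k ≤ g 0 * ((α k ^ 2 + lam ^ (k / T)) / 2)
      + 2 * L * ∑ t ∈ Finset.range k, lam ^ ((k - 1 - t) / T) * ((α k ^ 2 + α t ^ 2) / 2) := by
    intro k
    have h1 := mul_le_mul_of_nonneg_left (hclosed k) (hα0 k)
    have hq0 : (0:ℝ) ≤ lam ^ (k / T) := pow_nonneg hlam0 _
    have hq1 : lam ^ (k / T) ≤ 1 := pow_le_one₀ hlam0 hlam1.le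
    have ht1 : α k * (lam ^ (k / T) * g 0) ≤ g 0 * ((α k ^ 2 + lam ^ (k / T)) / 2) := by
      have hab : α k * lam ^ (k / T) ≤ (α k ^ 2 + lam ^ (k / T)) / 2 := by
        nlinarith [sq_nonneg (α k - lam ^ (k / T))]
      calc α k * (lam ^ (k / T) * g 0) = (α k * lam ^ (k / T)) * g 0 := by ring
        _ ≤ ((α k ^ 2 + lam ^ (k / T)) / 2) * g 0 := mul_le_mul_of_nonneg_right hab (hg0 0)
        _ = _ := by ring
    have ht2 : α k * (2 * L * ∑ t ∈ Finset.range k, lam ^ ((k - 1 - t) / T) * α t)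
        ≤ 2 * L * ∑ t ∈ Finset.range k, lam ^ ((k - 1 - t) / T) * ((α k ^ 2 + α t ^ 2) / 2) := by
      have hsum : ∑ t ∈ Finset.range k, lam ^ ((k - 1 - t) / T) * α t * α k
          ≤ ∑ t ∈ Finset.range k, lam ^ ((k - 1 - t) / T) * ((α k ^ 2 + α t ^ 2) / 2) := by
        apply Finset.sum_le_sum
        intro t _
        have he0 : (0:ℝ) ≤ lam ^ ((k - 1 - t) / T) := pow_nonneg hlam0 _
        have hab : α t * α k ≤ (α k ^ 2 + α t ^ 2) / 2 := by nlinarith [sq_nonneg (α k - α t)]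
        calc lam ^ ((k - 1 - t) / T) * α t * α k
            = lam ^ ((k - 1 - t) / T) * (α t * α k) := by ring
          _ ≤ _ := mul_le_mul_of_nonneg_left hab he0
      have heq : α k * (2 * L * ∑ t ∈ Finset.range k, lam ^ ((k - 1 - t) / T) * α t)
          = 2 * L * ∑ t ∈ Finset.range k, lam ^ ((k - 1 - t) / T) * α t * α k := by
        rw [← Finset.sum_mul]; ring
      rw [heq]
      exact mul_le_mul_of_nonneg_left hsum (by positivity)
    calc α k * g k ≤ α k * (lam ^ (k / T) * g 0)
          + α k * (2 * L * ∑ t ∈ Finset.range k, lam ^ ((k - 1 - t) / T) * α t) := by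
          rw [← mul_add]; exact h1
      _ ≤ _ := add_le_add ht1 ht2
  set C : ℝ := g 0 / 2 * (B + G) + L * (G * B) + L * (G * B) with hC
  have hpartial : ∀ N, ∑ k ∈ Finset.range N, α k * g k ≤ C := by
    intro N
    have hs1 : ∑ k ∈ Finset.range N, g 0 * ((α k ^ 2 + lam ^ (k / T)) / 2)
        ≤ g 0 / 2 * (B + G) := by
      have heq : ∑ k ∈ Finset.range N, g 0 * ((α k ^ 2 + lam ^ (k / T)) / 2)
          = g 0 / 2 * ((∑ k ∈ Finset.range N, α k ^ 2) + ∑ k ∈ Finset.range N, lam ^ (k / T)) := by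
        rw [← Finset.sum_add_distrib, Finset.mul_sum]
        exact Finset.sum_congr rfl fun k _ => by ring
      rw [heq]
      apply mul_le_mul_of_nonneg_left _ (div_nonneg (hg0 0) (by norm_num : (0:ℝ) ≤ 2))
      exact add_le_add (hBsum _) (hgeom N)
    have hs2 : ∑ k ∈ Finset.range N, (∑ t ∈ Finset.range k, lam ^ ((k - 1 - t) / T) * α k ^ 2)
        ≤ G * B := by
      have hinner : ∀ k, ∑ t ∈ Finset.range k, lam ^ ((k - 1 - t) / T) * α k ^ 2
          ≤ G * α k ^ 2 := by
        intro k
        rw [← Finset.sum_mul]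
        apply mul_le_mul_of_nonneg_right _ (sq_nonneg _)
        calc ∑ t ∈ Finset.range k, lam ^ ((k - 1 - t) / T)
            = ∑ t ∈ Finset.range k, lam ^ (t / T) :=
              Finset.sum_range_reflect (fun d => lam ^ (d / T)) k
          _ ≤ G := hgeom k
      calc ∑ k ∈ Finset.range N, (∑ t ∈ Finset.range k, lam ^ ((k - 1 - t) / T) * α k ^ 2)
          ≤ ∑ k ∈ Finset.range N, G * α k ^ 2 := Finset.sum_le_sum fun k _ => hinner k
        _ = G * ∑ k ∈ Finset.range N, α k ^ 2 := by rw [Finset.mul_sum]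
        _ ≤ G * B := mul_le_mul_of_nonneg_left (hBsum _) hG0
    have hs3 : ∑ k ∈ Finset.range N, (∑ t ∈ Finset.range k, lam ^ ((k - 1 - t) / T) * α t ^ 2)
        ≤ G * B := by
      have hswap : ∑ k ∈ Finset.range N, (∑ t ∈ Finset.range k, lam ^ ((k - 1 - t) / T) * α t ^ 2)
          = ∑ t ∈ Finset.range N,
              (∑ k ∈ Finset.Ico (t + 1) N, lam ^ ((k - 1 - t) / T) * α t ^ 2) := by
        simp only [Finset.range_eq_Ico]
        exact (Finset.sum_Ico_Ico_comm' 0 N (fun t k => lam ^ ((k - 1 - t) / T) * α t ^ 2)).symm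
      rw [hswap]
      have hinner : ∀ t, ∑ k ∈ Finset.Ico (t + 1) N, lam ^ ((k - 1 - t) / T) * α t ^ 2
          ≤ G * α t ^ 2 := by
        intro t
        rw [← Finset.sum_mul]
        apply mul_le_mul_of_nonneg_right _ (sq_nonneg _)
        rw [Finset.sum_Ico_eq_sum_range]
        calc ∑ d ∈ Finset.range (N - (t + 1)), lam ^ ((t + 1 + d - 1 - t) / T)
            = ∑ d ∈ Finset.range (N - (t + 1)), lam ^ (d / T) := by
              apply Finset.sum_congr rfl
              intro d _
              congr 2
              omega
          _ ≤ G := hgeom _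
      calc ∑ t ∈ Finset.range N, (∑ k ∈ Finset.Ico (t + 1) N, lam ^ ((k - 1 - t) / T) * α t ^ 2)
          ≤ ∑ t ∈ Finset.range N, G * α t ^ 2 := Finset.sum_le_sum fun t _ => hinner t
        _ = G * ∑ t ∈ Finset.range N, α t ^ 2 := by rw [Finset.mul_sum]
        _ ≤ G * B := mul_le_mul_of_nonneg_left (hBsum _) hG0
    calc ∑ k ∈ Finset.range N, α k * g k
        ≤ ∑ k ∈ Finset.range N, (g 0 * ((α k ^ 2 + lam ^ (k / T)) / 2)
            + 2 * L * ∑ t ∈ Finset.range k, lam ^ ((k - 1 - t) / T) * ((α k ^ 2 + α t ^ 2) / 2)) :=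
          Finset.sum_le_sum fun k _ => hpoint k
      _ = (∑ k ∈ Finset.range N, g 0 * ((α k ^ 2 + lam ^ (k / T)) / 2))
          + (L * ∑ k ∈ Finset.range N, (∑ t ∈ Finset.range k, lam ^ ((k - 1 - t) / T) * α k ^ 2)
           + L * ∑ k ∈ Finset.range N, (∑ t ∈ Finset.range k, lam ^ ((k - 1 - t) / T) * α t ^ 2)) := by
          rw [Finset.sum_add_distrib]
          congr 1
          rw [Finset.mul_sum, Finset.mul_sum, ← Finset.sum_add_distrib]
          apply Finset.sum_congr rfl
          intro k _
          rw [Finset.mul_sum, Finset.mul_sum, Finset.mul_sum, ← Finset.sum_add_distrib]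
          apply Finset.sum_congr rfl
          intro t _
          ring
      _ ≤ g 0 / 2 * (B + G) + (L * (G * B) + L * (G * B)) := by
          apply add_le_add hs1
          exact add_le_add (mul_le_mul_of_nonneg_left hs2 hL.le)
            (mul_le_mul_of_nonneg_left hs3 hL.le)
      _ = C := by rw [hC]; ring
  have hsummable : Summable (fun k => α k * g k) :=
    summable_of_sum_range_le (fun k => mul_nonneg (hα0 k) (hg0 k)) hpartial
  exact hsummable.congr fun k => by rw [hmain k]
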